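/- If signatures are unforgeable in the symbolic model (a signature sign(m, k) is derivable only if the adversary knows both m and the signing key k, or observed the signature itself), and the authenticator's signing key is never revealed, then every signature sign(m, authKey) in the adversary's knowledge was output by the authenticator. -/
import Mathlib


abbrev Key := ℕ

/-- Symbolic message algebra extended with signatures `sign m k`. -/
inductive Msg where
  | atom : ℕ → Msg
  | pair : Msg → Msg → Msg
  | aenc : Msg → Key → Msg
  | pk : Key → Msg
  | sk : Key → Msg
  | sign : Msg → Key → Msg
deriving DecidableEq

/-- Dolev-Yao deduction: `sign m k` can be constructed only from knowledge of `m` and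
the signing key `sk k`; a signature can be verified and its payload read, but the
signing key cannot be extracted from it. -/
inductive Knows : Set Msg → Msg → Prop where
  | mem {S m} : m ∈ S → Knows S m
  | pair_intro {S m n} : Knows S m → Knows S n → Knows S (Msg.pair m n)
  | fst {S m n} : Knows S (Msg.pair m n) → Knows S m
  | snd {S m n} : Knows S (Msg.pair m n) → Knows S n
  | aenc_intro {S m k} : Knows S m → Knows S (Msg.pk k) → Knows S (Msg.aenc m k)
  | adec {S m k} : Knows S (Msg.aenc m k) → Knows S (Msg.sk k) → Knows S m
  | sign_intro {S m k} : Knows S m → Knows S (Msg.sk k) → Knows S (Msg.sign m k)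
  | sign_payload {S m k} : Knows S (Msg.sign m k) → Knows S m

/-- Subterm relation on symbolic messages. -/
inductive Subterm : Msg → Msg → Prop where
  | refl (m) : Subterm m m
  | pair_left {m a b} : Subterm m a → Subterm m (Msg.pair a b)
  | pair_right {m a b} : Subterm m b → Subterm m (Msg.pair a b)
  | aenc {m a k} : Subterm m a → Subterm m (Msg.aenc a k)
  | sign {m a k} : Subterm m a → Subterm m (Msg.sign a k)

/-- **Unforgeability of authenticator signatures.** Let `S` be the adversary knowledge
set, containing the set `O` of signatures actually output by the honest authenticator
plus other messages in which signatures under `authKey` never occur as accessible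
subterms except at top level. If the authenticator's signing key is never revealed
(`sk authKey` is not derivable from `S`), then every signature `sign m authKey` the
adversary knows was output by the authenticator, i.e. it is an observed element of `S`
(in fact of `O`) and not a forgery. -/
theorem signatures_unforgeable
    (S O : Set Msg) (authKey : Key) (m : Msg)
    (hO : O ⊆ S)
    (hOsig : ∀ x ∈ O, ∃ m', x = Msg.sign m' authKey)
    -- signatures under `authKey` occur in S only as top-level messages (elements of O)
    (htop : ∀ x ∈ S, ∀ m', Subterm (Msg.sign m' authKey) x →
      x = Msg.sign m' authKey ∧ x ∈ O)
    -- the authenticator's signing key is never revealed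
    (hkey : ¬ Knows S (Msg.sk authKey))
    (h : Knows S (Msg.sign m authKey)) :
    Msg.sign m authKey ∈ S := by
  have key : ∀ t, Knows S t → ∀ m', Subterm (Msg.sign m' authKey) t →
      Msg.sign m' authKey ∈ O := by
    intro t ht
    induction ht with
    | mem hx => intro m' hsub; obtain ⟨he, ho⟩ := htop _ hx _ hsub; exact he ▸ ho
    | pair_intro h1 h2 ih1 ih2 =>
        intro m' hsub
        cases hsub with
        | pair_left h => exact ih1 _ h
        | pair_right h => exact ih2 _ h
    | fst h ih => intro m' hsub; exact ih _ (Subterm.pair_left hsub)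
    | snd h ih => intro m' hsub; exact ih _ (Subterm.pair_right hsub)
    | aenc_intro h1 h2 ih1 ih2 =>
        intro m' hsub
        cases hsub with
        | aenc h => exact ih1 _ h
    | adec h1 h2 ih1 ih2 => intro m' hsub; exact ih1 _ (Subterm.aenc hsub)
    | sign_intro h1 h2 ih1 ih2 =>
        intro m' hsub
        cases hsub with
        | refl => exact absurd h2 hkey
        | sign h => exact ih1 _ h
    | sign_payload h ih => intro m' hsub; exact ih _ (Subterm.sign hsub)
  exact hO (key _ h m (Subterm.refl _))
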